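/- With f_s as above and assuming 1 < s < s* = inf{‖z‖₁/‖z‖_∞ : Qz = 0, z ≠ 0}, if η* > 0 is a fixed point of f_s (f_s(η*) = η*), then η* = 1/ω_◇(Q,s), where ω_◇(Q,s) = inf{ ‖Qz‖_◇/‖z‖_∞ : z ≠ 0, ‖z‖₁ ≤ s‖z‖_∞ }. -/
import Mathlib


open Finset Matrix

/-- ℓ₁ norm of a vector. -/
noncomputable def l1 {n : ℕ} (x : Fin n → ℝ) : ℝ := ∑ i, |x i|

/-- ℓ∞ (sup) norm of a vector. -/
noncomputable def linf {n : ℕ} (x : Fin n → ℝ) : ℝ := ⨆ i, |x i|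

lemma abs_le_linf {n : ℕ} (z : Fin n → ℝ) (i : Fin n) : |z i| ≤ linf z := by
  rw [linf]
  exact le_ciSup (f := fun i => |z i|) (Set.Finite.bddAbove (Set.finite_range _)) i

lemma linf_le {n : ℕ} [Nonempty (Fin n)] {z : Fin n → ℝ} {b : ℝ}
    (h : ∀ i, |z i| ≤ b) : linf z ≤ b := by rw [linf]; exact ciSup_le h

lemma exists_argmax {n : ℕ} [Nonempty (Fin n)] (z : Fin n → ℝ) :
    ∃ i, |z i| = linf z := by
  obtain ⟨i, hi⟩ := Finite.exists_max (fun i => |z i|)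
  exact ⟨i, le_antisymm (abs_le_linf z i) (ciSup_le hi)⟩

lemma linf_zero {n : ℕ} [Nonempty (Fin n)] : linf (0 : Fin n → ℝ) = 0 := by
  simp [linf]

lemma linf_pos {n : ℕ} {z : Fin n → ℝ} (hz : z ≠ 0) : 0 < linf z := by
  obtain ⟨i, hi⟩ := Function.ne_iff.mp hz
  have : (0:ℝ) < |z i| := abs_pos.mpr hi
  exact lt_of_lt_of_le this (abs_le_linf z i)

lemma l1_smul {n : ℕ} (c : ℝ) (z : Fin n → ℝ) : l1 (c • z) = |c| * l1 z := by
  simp [l1, abs_mul, Finset.mul_sum]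

lemma linf_smul {n : ℕ} [Nonempty (Fin n)] (c : ℝ) (z : Fin n → ℝ) :
    linf (c • z) = |c| * linf z := by
  obtain ⟨i, hi⟩ := exists_argmax z
  refine le_antisymm (linf_le fun j => ?_) ?_
  · have : |c * z j| = |c| * |z j| := abs_mul _ _
    rw [Pi.smul_apply, smul_eq_mul, this]
    exact mul_le_mul_of_nonneg_left (abs_le_linf z j) (abs_nonneg c)
  · calc |c| * linf z = |c * z i| := by rw [abs_mul, hi]
    _ = |(c • z) i| := by simp
    _ ≤ linf (c • z) := abs_le_linf _ i

lemma perturb {m n : ℕ} [Nonempty (Fin n)]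
    (N : (Fin m → ℝ) → ℝ)
    (hN_add : ∀ u v, N (u + v) ≤ N u + N v)
    (hN_smul : ∀ (c : ℝ) (v : Fin m → ℝ), N (c • v) = |c| * N v)
    (Q : Matrix (Fin m) (Fin n) ℝ)
    (w : Fin n → ℝ) (i : Fin n) (hi : |w i| = linf w) (t : ℝ) (ht : 0 ≤ t) :
    ∃ w' : Fin n → ℝ, l1 w' = l1 w + t ∧ linf w' = linf w + t ∧
      N (Q.mulVec w') ≤ N (Q.mulVec w) + t * N (Q.mulVec (Pi.single i 1)) := by
  set σ : ℝ := if 0 ≤ w i then 1 else -1 with hσ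
  have hσabs : |σ| = 1 := by
    rw [hσ]; split <;> simp
  set w' : Fin n → ℝ := w + (t * σ) • (Pi.single i 1 : Fin n → ℝ) with hw'
  have happ : ∀ j, w' j = w j + (if j = i then t * σ else 0) := by
    intro j
    simp [hw', Pi.single_apply]
  have hkey : |w i + t * σ| = |w i| + t := by
    rw [hσ]
    by_cases h : 0 ≤ w i
    · rw [if_pos h, mul_one, abs_of_nonneg (by linarith), abs_of_nonneg h]
    · push_neg at h
      rw [if_neg (not_le.mpr h), abs_of_neg h]
      rw [show w i + t * (-1) = -(-(w i) + t) by ring, abs_neg,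
        abs_of_nonneg (by linarith)]
  have habs : ∀ j, |w' j| = |w j| + (if j = i then t else 0) := by
    intro j
    rw [happ j]
    by_cases h : j = i
    · subst h; rw [if_pos rfl, if_pos rfl, hkey]
    · simp [h]
  refine ⟨w', ?_, ?_, ?_⟩
  · rw [l1, l1]
    simp only [habs]
    rw [Finset.sum_add_distrib, Finset.sum_ite_eq' Finset.univ i (fun _ => t)]
    simp
  · refine le_antisymm (linf_le fun j => ?_) ?_
    · rw [habs]
      by_cases h : j = i
      · subst h; rw [if_pos rfl, hi]
      · rw [if_neg h]
        have := abs_le_linf w j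
        linarith
    · have : |w' i| = linf w + t := by rw [habs, if_pos rfl, hi]
      rw [← this]; exact abs_le_linf w' i
  · have hmv : Q.mulVec w' = Q.mulVec w + (t * σ) • Q.mulVec (Pi.single i 1) := by
      rw [hw', Matrix.mulVec_add, Matrix.mulVec_smul]
    rw [hmv]
    calc N (Q.mulVec w + (t * σ) • Q.mulVec (Pi.single i 1))
        ≤ N (Q.mulVec w) + N ((t * σ) • Q.mulVec (Pi.single i 1)) := hN_add _ _
      _ = N (Q.mulVec w) + t * N (Q.mulVec (Pi.single i 1)) := by
          rw [hN_smul, abs_mul, hσabs, mul_one, abs_of_nonneg ht]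

/-- f_s(η) = max{ ‖z‖_∞ : ‖Qz‖_◇ ≤ 1, ‖z‖₁ ≤ sη }, where ‖·‖_◇ is the norm N on ℝᵐ. -/
noncomputable def fs {m n : ℕ} (N : (Fin m → ℝ) → ℝ)
    (Q : Matrix (Fin m) (Fin n) ℝ) (s : ℝ) (η : ℝ) : ℝ :=
  sSup {r | ∃ z : Fin n → ℝ, N (Q.mulVec z) ≤ 1 ∧ l1 z ≤ s * η ∧ r = linf z}

/-- ω_◇(Q,s) = inf{ ‖Qz‖_◇/‖z‖_∞ : z ≠ 0, ‖z‖₁ ≤ s‖z‖_∞ }. -/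
noncomputable def omegaN {m n : ℕ} (N : (Fin m → ℝ) → ℝ)
    (Q : Matrix (Fin m) (Fin n) ℝ) (s : ℝ) : ℝ :=
  sInf {r | ∃ z : Fin n → ℝ, z ≠ 0 ∧ l1 z ≤ s * linf z ∧ r = N (Q.mulVec z) / linf z}

set_option maxHeartbeats 2000000 in
theorem stmt18 {m n : ℕ}
    (N : (Fin m → ℝ) → ℝ)
    (hN_add : ∀ u v, N (u + v) ≤ N u + N v)
    (hN_smul : ∀ (c : ℝ) (v : Fin m → ℝ), N (c • v) = |c| * N v)
    (hN_def : ∀ v, N v = 0 → v = 0)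
    (Q : Matrix (Fin m) (Fin n) ℝ) (s : ℝ) (hs : 1 < s)
    (hss : ENNReal.ofReal s <
      ⨅ z : {z : Fin n → ℝ // Q.mulVec z = 0 ∧ z ≠ 0},
        ENNReal.ofReal (l1 z.1 / linf z.1))
    (ηstar : ℝ) (hpos : 0 < ηstar) (hfix : fs N Q s ηstar = ηstar) :
    ηstar = 1 / omegaN N Q s := by
  have hs0 : (0:ℝ) < s := by linarith
  -- basic facts about N
  have hN0 : N 0 = 0 := by
    have h := hN_smul 0 0
    simpa using h
  have hNnn : ∀ v, 0 ≤ N v := by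
    intro v
    have h1 := hN_add v (-v)
    have h2 : N (-v) = N v := by
      have := hN_smul (-1) v
      simpa using this
    rw [add_neg_cancel, hN0, h2] at h1
    linarith
  -- n positive
  rcases Nat.eq_zero_or_pos n with h0 | hn
  · exfalso
    subst h0
    have hz : ∀ z : Fin 0 → ℝ, linf z = 0 := by
      intro z
      rw [linf, iSup, Set.range_eq_empty, Real.sSup_empty]
    have hS : {r | ∃ z : Fin 0 → ℝ, N (Q.mulVec z) ≤ 1 ∧ l1 z ≤ s * ηstar ∧ r = linf z}
        = {0} := by
      ext r
      constructor
      · rintro ⟨z, _, _, rfl⟩; exact hz z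
      · rintro rfl
        exact ⟨0, by simp [Matrix.mulVec_zero, hN0], by
          simp only [l1]; positivity, (hz 0).symm⟩
    rw [fs, hS, csSup_singleton] at hfix
    linarith
  haveI : Nonempty (Fin n) := ⟨⟨0, hn⟩⟩
  set S := {r | ∃ z : Fin n → ℝ, N (Q.mulVec z) ≤ 1 ∧ l1 z ≤ s * ηstar ∧ r = linf z}
    with hSdef
  have hfixS : sSup S = ηstar := hfix
  have hS0 : (0:ℝ) ∈ S := by
    refine ⟨0, by simp [Matrix.mulVec_zero, hN0], ?_, linf_zero.symm⟩
    have : l1 (0 : Fin n → ℝ) = 0 := by simp [l1]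
    rw [this]; positivity
  have hSne : S.Nonempty := ⟨0, hS0⟩
  have hSbdd : BddAbove S := by
    by_contra h
    rw [Real.sSup_of_not_bddAbove h] at hfixS
    linarith
  -- key fact: feasibility implies linf ≤ ηstar
  have F1 : ∀ z : Fin n → ℝ, N (Q.mulVec z) ≤ 1 → l1 z ≤ s * ηstar → linf z ≤ ηstar := by
    intro z h1 h2
    have : linf z ∈ S := ⟨z, h1, h2, rfl⟩
    calc linf z ≤ sSup S := le_csSup hSbdd this
      _ = ηstar := hfixS
  -- column sum bound
  set C := ∑ j : Fin n, N (Q.mulVec (Pi.single j 1)) with hCdef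
  have hC : 0 ≤ C := Finset.sum_nonneg fun j _ => hNnn _
  have hCj : ∀ j : Fin n, N (Q.mulVec (Pi.single j 1)) ≤ C := by
    intro j
    exact Finset.single_le_sum (f := fun j : Fin n => N (Q.mulVec (Pi.single j 1)))
      (fun k _ => hNnn _) (Finset.mem_univ j)
  -- omega set
  set T := {r | ∃ z : Fin n → ℝ, z ≠ 0 ∧ l1 z ≤ s * linf z ∧ r = N (Q.mulVec z) / linf z}
    with hTdef
  have hone : l1 (Pi.single (⟨0, hn⟩ : Fin n) 1 : Fin n → ℝ) = 1 ∧
      linf (Pi.single (⟨0, hn⟩ : Fin n) 1 : Fin n → ℝ) = 1 := by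
    constructor
    · rw [l1]
      rw [Finset.sum_eq_single (⟨0, hn⟩ : Fin n)]
      · simp
      · intro j _ hj; simp [Pi.single_apply, hj]
      · intro h; exact absurd (Finset.mem_univ _) h
    · refine le_antisymm (linf_le fun j => ?_) ?_
      · by_cases h : j = (⟨0, hn⟩ : Fin n) <;> simp [Pi.single_apply, h]
      · have h1 := abs_le_linf (Pi.single (⟨0, hn⟩ : Fin n) 1 : Fin n → ℝ) (⟨0, hn⟩ : Fin n)
        simpa using h1
  have hTne : T.Nonempty := by
    refine ⟨N (Q.mulVec (Pi.single (⟨0, hn⟩ : Fin n) 1)) / linf (Pi.single (⟨0, hn⟩ : Fin n) 1),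
      Pi.single (⟨0, hn⟩ : Fin n) 1, ?_, ?_, rfl⟩
    · intro h
      have := congrFun h (⟨0, hn⟩ : Fin n)
      simp at this
    · rw [hone.1, hone.2]; linarith
  have hTbdd : BddBelow T := by
    refine ⟨0, ?_⟩
    rintro r ⟨z, hz, _, rfl⟩
    exact div_nonneg (hNnn _) (linf_pos hz).le
  -- Claim A : 1/ηstar ≤ omegaN
  have claimA : 1 / ηstar ≤ sInf T := by
    refine le_csInf hTne ?_
    rintro r ⟨z, hz, hl1z, rfl⟩
    have hlz : 0 < linf z := linf_pos hz
    rw [div_le_div_iff₀ hpos hlz, one_mul]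
    by_contra hcon
    push_neg at hcon
    -- hcon : N (Q.mulVec z) * ηstar < linf z
    set a := ηstar / linf z with hadef
    have ha : 0 < a := div_pos hpos hlz
    set w := a • z with hwdef
    have hlw : linf w = ηstar := by
      rw [hwdef, linf_smul, abs_of_pos ha, hadef, div_mul_cancel₀ _ hlz.ne']
    have hl1w : l1 w ≤ s * ηstar := by
      rw [hwdef, l1_smul, abs_of_pos ha]
      calc a * l1 z ≤ a * (s * linf z) := by
            exact mul_le_mul_of_nonneg_left hl1z ha.le
        _ = s * (a * linf z) := by ring
        _ = s * ηstar := by rw [hadef, div_mul_cancel₀ _ hlz.ne']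
    have hNw : N (Q.mulVec w) < 1 := by
      rw [hwdef, Matrix.mulVec_smul, hN_smul, abs_of_pos ha, hadef]
      rw [div_mul_eq_mul_div, div_lt_one hlz]
      nlinarith
    obtain ⟨i, hi⟩ := exists_argmax w
    set Ci := N (Q.mulVec (Pi.single i 1)) with hCidef
    have hCi : 0 ≤ Ci := hNnn _
    set δ := (1 - N (Q.mulVec w)) / (Ci + 1) with hδdef
    have hδ : 0 < δ := div_pos (by linarith) (by linarith)
    obtain ⟨w', hw'1, hw'2, hw'3⟩ := perturb N hN_add hN_smul Q w i hi δ hδ.le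
    have hδCi : δ * (Ci + 1) = 1 - N (Q.mulVec w) := by
      rw [hδdef, div_mul_cancel₀ _ (by linarith : Ci + 1 ≠ 0)]
    have hNw' : N (Q.mulVec w') ≤ 1 := by
      have : δ * Ci ≤ 1 - N (Q.mulVec w) := by nlinarith
      calc N (Q.mulVec w') ≤ N (Q.mulVec w) + δ * Ci := hw'3
        _ ≤ 1 := by linarith
    set μ := s * ηstar / (s * ηstar + δ) with hμdef
    have hsη : 0 < s * ηstar := by positivity
    have hμ : 0 < μ := div_pos hsη (by linarith)
    have hμ1 : μ ≤ 1 := by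
      rw [hμdef, div_le_one (by linarith)]; linarith
    set w'' := μ • w' with hw''def
    have hNw'' : N (Q.mulVec w'') ≤ 1 := by
      rw [hw''def, Matrix.mulVec_smul, hN_smul, abs_of_pos hμ]
      calc μ * N (Q.mulVec w') ≤ μ * 1 := mul_le_mul_of_nonneg_left hNw' hμ.le
        _ ≤ 1 := by linarith
    have hl1w'' : l1 w'' ≤ s * ηstar := by
      rw [hw''def, l1_smul, abs_of_pos hμ]
      calc μ * l1 w' = μ * (l1 w + δ) := by rw [hw'1]
        _ ≤ μ * (s * ηstar + δ) := mul_le_mul_of_nonneg_left (by linarith) hμ.le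
        _ = s * ηstar := by
            rw [hμdef, div_mul_cancel₀ _ (by linarith : s * ηstar + δ ≠ 0)]
    have hlinfw'' : linf w'' = μ * (ηstar + δ) := by
      rw [hw''def, linf_smul, abs_of_pos hμ, hw'2, hlw]
    have hle := F1 w'' hNw'' hl1w''
    rw [hlinfw''] at hle
    -- μ * (ηstar + δ) ≤ ηstar contradicts s > 1
    rw [hμdef, div_mul_eq_mul_div, div_le_iff₀ (by linarith)] at hle
    nlinarith [mul_pos (mul_pos (show (0:ℝ) < s - 1 by linarith) hpos) hδ]
  -- Claim B : omegaN ≤ 1/ηstar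
  have claimB : sInf T ≤ 1 / ηstar := by
    by_contra hcon
    push_neg at hcon
    set ω := sInf T with hωdef
    have hω0 : 0 < ω := lt_trans (by positivity) hcon
    have hωη : 1 < ω * ηstar := by
      rw [div_lt_iff₀ hpos] at hcon
      linarith
    set B := s / (s - 1) with hBdef
    have hB : 0 < B := div_pos hs0 (by linarith)
    set D := B * C + ω + 1 with hDdef
    have hD : 0 < D := by positivity
    set ε := min (ηstar / 2) ((ω * ηstar - 1) / D) with hεdef
    have hε : 0 < ε := lt_min (by positivity) (div_pos (by linarith) hD)
    have hεη : ε < ηstar := lt_of_le_of_lt (min_le_left _ _) (by linarith)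
    have hεD : ε * D ≤ ω * ηstar - 1 := by
      have := min_le_right (ηstar / 2) ((ω * ηstar - 1) / D)
      calc ε * D ≤ (ω * ηstar - 1) / D * D := by
            exact mul_le_mul_of_nonneg_right this hD.le
        _ = ω * ηstar - 1 := div_mul_cancel₀ _ hD.ne'
    obtain ⟨r, hrS, hr⟩ := exists_lt_of_lt_csSup hSne
      (show ηstar - ε < sSup S by rw [hfixS]; linarith)
    obtain ⟨z, hz1, hz2, rfl⟩ := hrS
    have hlz : 0 < linf z := by linarith
    have hz0 : z ≠ 0 := by
      intro h; rw [h, linf_zero] at hlz; linarith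
    obtain ⟨i, hi⟩ := exists_argmax z
    set t := max 0 ((l1 z - s * linf z) / (s - 1)) with htdef
    have ht0 : 0 ≤ t := le_max_left _ _
    have hts : l1 z - s * linf z ≤ (s - 1) * t := by
      have h1 : (l1 z - s * linf z) / (s - 1) ≤ t := le_max_right _ _
      rw [div_le_iff₀ (by linarith : (0:ℝ) < s - 1)] at h1
      linarith
    have htε : t ≤ B * ε := by
      refine max_le (by positivity) ?_
      rw [hBdef, div_le_iff₀ (by linarith : (0:ℝ) < s - 1), div_mul_eq_mul_div,
        div_mul_cancel₀ _ (by linarith : s - 1 ≠ 0)]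
      nlinarith
    obtain ⟨w, hw1, hw2, hw3⟩ := perturb N hN_add hN_smul Q z i hi t ht0
    have hlw : linf w = linf z + t := hw2
    have hlwpos : 0 < linf w := by rw [hlw]; linarith
    have hw0 : w ≠ 0 := by
      intro h; rw [h, linf_zero] at hlwpos; linarith
    have hmem : N (Q.mulVec w) / linf w ∈ T := by
      refine ⟨w, hw0, ?_, rfl⟩
      rw [hw1, hlw]
      nlinarith
    have hωle : ω ≤ N (Q.mulVec w) / linf w := csInf_le hTbdd hmem
    have hNwle : N (Q.mulVec w) ≤ 1 + B * ε * C := by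
      calc N (Q.mulVec w) ≤ N (Q.mulVec z) + t * N (Q.mulVec (Pi.single i 1)) := hw3
        _ ≤ 1 + t * C := by
            have := hCj i
            nlinarith [hNnn (Q.mulVec (Pi.single i 1))]
        _ ≤ 1 + B * ε * C := by nlinarith
    have hbound : N (Q.mulVec w) / linf w ≤ (1 + B * ε * C) / (ηstar - ε) := by
      apply div_le_div₀ (by positivity) hNwle (by linarith)
      rw [hlw]; linarith
    have hfinal : (1 + B * ε * C) / (ηstar - ε) < ω := by
      rw [div_lt_iff₀ (by linarith)]
      nlinarith
    linarith
  have heq : omegaN N Q s = 1 / ηstar := le_antisymm claimB claimA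
  rw [heq, one_div_one_div]
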